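/- arXiv:1404.3637 — 3 statements merged into one kernel-verified Lean document; each statement's English description precedes it below -/
import Mathlib

section
/- Every finite exact potential game admits at least one pure Nash equilibrium. -/
/-- Every finite exact potential game admits at least one pure Nash equilibrium. -/
theorem stmt_1 {ι : Type*} [Fintype ι] [DecidableEq ι] [Nonempty ι]
    {A : ι → Type*} [∀ i, Fintype (A i)] [∀ i, Nonempty (A i)]
    (U : ι → (∀ i, A i) → ℝ) (φ : (∀ i, A i) → ℝ)
    (hpot : ∀ (i : ι) (a : ∀ j, A j) (b : A i),
      U i a - U i (Function.update a i b) = φ a - φ (Function.update a i b)) :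
    ∃ astar : ∀ j, A j, ∀ (i : ι) (b : A i),
      U i (Function.update astar i b) ≤ U i astar := by
  obtain ⟨astar, hmax⟩ := Finite.exists_max φ
  exact ⟨astar, fun i b => by
    have h := hpot i astar b
    have := hmax (Function.update astar i b)
    linarith⟩
end

section
/- Consider M ≥ 3 players with action set {0,1} each, and common cost function φ'(a) = C + d_i if ‖a‖₁ = 1 with transmitter i, and φ'(a) = C + W if ‖a‖₁ ≠ 1, where C ≥ 0, W ≥ 1, and 0 ≤ d_i ≤ W - 1 for all i (so a single transmission is never worse than no/multiple transmissions). Players maximize U = -φ'. Then: (a) profiles with ‖a‖₁ = 0 are not Nash equilibria; (b) profiles with ‖a‖₁ = 2 are not Nash equilibria; (c) every profile with ‖a‖₁ = 1 or ‖a‖₁ > 2 is a Nash equilibrium. -/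
/-- The number of transmitting players in an action profile. -/
def norm1 {M : ℕ} (a : Fin M → Bool) : ℕ := ∑ i, if a i then 1 else 0

lemma norm1_update {M : ℕ} (a : Fin M → Bool) (i : Fin M) (b : Bool) :
    norm1 (Function.update a i b) + (if a i then 1 else 0) =
      norm1 a + (if b then 1 else 0) := by
  unfold norm1
  have h1 : (fun j => if (Function.update a i b) j then 1 else 0) =
      Function.update (fun j => if a j then 1 else 0) i (if b then (1:ℕ) else 0) := by
    funext j
    by_cases h : j = i
    · subst h; simp
    · simp [Function.update_of_ne h]
  calc (∑ j, if (Function.update a i b) j then 1 else 0) + (if a i then 1 else 0)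
      = (∑ j, Function.update (fun j => if a j then 1 else 0) i (if b then (1:ℕ) else 0) j)
        + (if a i then 1 else 0) := by rw [h1]
    _ = ((if b then 1 else 0) + ∑ j ∈ Finset.univ.erase i, (if a j then 1 else 0))
        + (if a i then 1 else 0) := by
        rw [Finset.sum_update_of_mem (Finset.mem_univ i), Finset.sdiff_singleton_eq_erase]
    _ = (∑ j, if a j then 1 else 0) + (if b then 1 else 0) := by
        rw [← Finset.add_sum_erase _ _ (Finset.mem_univ i)]
        ring
  -- the erase sum above: univ.erase i sum type matches? check

lemma norm1_exists_true {M : ℕ} {a : Fin M → Bool} (h : norm1 a ≠ 0) :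
    ∃ j, a j = true := by
  by_contra hall
  push_neg at hall
  apply h
  unfold norm1
  apply Finset.sum_eq_zero
  intro j _
  simp [hall j]

lemma norm1_zero_false {M : ℕ} {a : Fin M → Bool} (h : norm1 a = 0) (i : Fin M) :
    a i = false := by
  by_contra hi
  simp at hi
  have : (if a i then 1 else 0) ≤ norm1 a := by
    unfold norm1
    exact Finset.single_le_sum (f := fun j => if a j then 1 else 0)
      (fun j _ => Nat.zero_le _) (Finset.mem_univ i)
  rw [h, hi] at this
  simp at this

/-- Sum decoding delay game (Game 3): with cost C + dᵢ for a single transmitter i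
and C + W otherwise (0 ≤ dᵢ ≤ W - 1): (a) profiles with ‖a‖₁ = 0 are not NE,
(b) profiles with ‖a‖₁ = 2 are not NE, (c) every profile with ‖a‖₁ = 1 or ‖a‖₁ > 2 is a NE. -/
theorem stmt_5 {M : ℕ} (hM : 3 ≤ M) (C W : ℝ) (d : Fin M → ℝ)
    (hC : 0 ≤ C) (hW : 1 ≤ W)
    (hd0 : ∀ i, 0 ≤ d i) (hd1 : ∀ i, d i ≤ W - 1)
    (φ' : (Fin M → Bool) → ℝ)
    (hc1 : ∀ (a : Fin M → Bool) (i : Fin M),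
      norm1 a = 1 → a i = true → φ' a = C + d i)
    (hc2 : ∀ a : Fin M → Bool, norm1 a ≠ 1 → φ' a = C + W) :
    (∀ a : Fin M → Bool, norm1 a = 0 →
      ¬ (∀ (i : Fin M) (b : Bool), φ' a ≤ φ' (Function.update a i b))) ∧
    (∀ a : Fin M → Bool, norm1 a = 2 →
      ¬ (∀ (i : Fin M) (b : Bool), φ' a ≤ φ' (Function.update a i b))) ∧
    (∀ a : Fin M → Bool, (norm1 a = 1 ∨ 2 < norm1 a) →
      ∀ (i : Fin M) (b : Bool), φ' a ≤ φ' (Function.update a i b)) := by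
  refine ⟨?_, ?_, ?_⟩
  · -- norm1 = 0
    intro a h0 hne
    have hMpos : 0 < M := by omega
    let i : Fin M := ⟨0, hMpos⟩
    have hai : a i = false := norm1_zero_false h0 i
    have hu := norm1_update a i true
    rw [h0, hai] at hu
    simp at hu
    have h1 : norm1 (Function.update a i true) = 1 := hu
    have hup : (Function.update a i true) i = true := by simp
    have hφu : φ' (Function.update a i true) = C + d i := hc1 _ i h1 hup
    have hφa : φ' a = C + W := hc2 a (by omega)
    have := hne i true
    rw [hφu, hφa] at this
    have := hd1 i
    linarith
  · -- norm1 = 2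
    intro a h2 hne
    obtain ⟨i, hi⟩ := norm1_exists_true (a := a) (by omega)
    have hu := norm1_update a i false
    rw [h2, hi] at hu
    simp at hu
    have h1 : norm1 (Function.update a i false) = 1 := by omega
    obtain ⟨j, hj⟩ := norm1_exists_true (a := Function.update a i false) (by omega)
    have hφu : φ' (Function.update a i false) = C + d j := hc1 _ j h1 hj
    have hφa : φ' a = C + W := hc2 a (by omega)
    have := hne i false
    rw [hφu, hφa] at this
    have := hd1 j
    linarith
  · -- norm1 = 1 or > 2
    intro a ha i b
    by_cases hb : b = a i
    · subst hb; rw [Function.update_eq_self]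
    have hu := norm1_update a i b
    rcases ha with h1 | h3
    · -- norm1 a = 1
      obtain ⟨j, hj⟩ := norm1_exists_true (a := a) (by omega)
      have hφa : φ' a = C + d j := hc1 a j h1 hj
      have hn : norm1 (Function.update a i b) ≠ 1 := by
        cases hab : a i <;> cases hbb : b <;> simp [hab, hbb] at hu hb ⊢ <;> omega
      have hφu : φ' (Function.update a i b) = C + W := hc2 _ hn
      rw [hφa, hφu]
      have := hd1 j
      linarith
    · -- norm1 a > 2
      have hφa : φ' a = C + W := hc2 a (by omega)
      have hn : norm1 (Function.update a i b) ≠ 1 := by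
        cases hab : a i <;> cases hbb : b <;> simp [hab, hbb] at hu ⊢ <;> omega
      have hφu : φ' (Function.update a i b) = C + W := hc2 _ hn
      rw [hφa, hφu]
end

section
/- Let φ' be a common cost over profiles a ∈ {0,1}^M of the form φ'(a) = g(‖a‖₁) + h(a) where h(a) = d_i·[‖a‖₁ = 1 ∧ a_i = 1] + W·[‖a‖₁ ≠ 1] with 0 ≤ d_i < W. If g is strictly increasing on {0,1,…,M}, then every profile a with ‖a‖₁ ≥ 2 admits a strictly cost-decreasing unilateral deviation; hence no profile with two or more transmitters is a Nash equilibrium of the game with utility -φ'. -/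
lemma norm1_le {M : ℕ} (a : Fin M → Bool) : norm1 a ≤ M := by
  classical
  calc norm1 a ≤ ∑ _i : Fin M, 1 := Finset.sum_le_sum (fun i _ => by
        by_cases h : a i <;> simp [h])
    _ = M := by simp

lemma exists_true_of_pos {M : ℕ} (a : Fin M → Bool) (h : 0 < norm1 a) :
    ∃ i, a i = true := by
  classical
  by_contra hc
  push_neg at hc
  have : norm1 a = 0 := by
    unfold norm1
    refine Finset.sum_eq_zero fun i _ => ?_
    simp [hc i]
  omega

lemma norm1_update_false {M : ℕ} (a : Fin M → Bool) (i : Fin M) (hi : a i = true) :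
    norm1 (Function.update a i false) = norm1 a - 1 := by
  classical
  unfold norm1
  classical
  rw [show (∑ j, if Function.update a i false j then 1 else 0) =
      (if Function.update a i false i then 1 else 0) +
        ∑ j ∈ Finset.univ.erase i, (if Function.update a i false j then 1 else 0) by
    exact (Finset.add_sum_erase _ _ (Finset.mem_univ i)).symm]
  rw [show (∑ j, if a j then 1 else 0) =
      (if a i then 1 else 0) + ∑ j ∈ Finset.univ.erase i, (if a j then 1 else 0) by
    exact (Finset.add_sum_erase _ _ (Finset.mem_univ i)).symm]
  have : ∀ j ∈ Finset.univ.erase i,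
      (if Function.update a i false j then 1 else 0) = (if a j then 1 else 0) := by
    intro j hj
    rw [Function.update_of_ne (Finset.ne_of_mem_erase hj)]
  rw [Finset.sum_congr rfl this]
  simp [hi]

/-- With cost φ'(a) = g(‖a‖₁) + h(a), where h(a) = dᵢ for a single transmitter i and W
otherwise (0 ≤ dᵢ < W), and g strictly increasing on {0,…,M}, every profile with at least
two transmitters admits a strictly cost-decreasing unilateral deviation, hence is not a
Nash equilibrium. -/
theorem stmt_19 {M : ℕ} (hM : 2 ≤ M) (W : ℝ) (d : Fin M → ℝ) (g : ℕ → ℝ)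
    (hd0 : ∀ i, 0 ≤ d i) (hdW : ∀ i, d i < W)
    (hg : ∀ k l : ℕ, k < l → l ≤ M → g k < g l)
    (h : (Fin M → Bool) → ℝ)
    (hh1 : ∀ (a : Fin M → Bool) (i : Fin M),
      norm1 a = 1 → a i = true → h a = d i)
    (hh2 : ∀ a : Fin M → Bool, norm1 a ≠ 1 → h a = W)
    (a : Fin M → Bool) (ha : 2 ≤ norm1 a) :
    (∃ (i : Fin M) (b : Bool),
      g (norm1 (Function.update a i b)) + h (Function.update a i b) <
        g (norm1 a) + h a) ∧
    ¬ (∀ (i : Fin M) (b : Bool),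
      g (norm1 a) + h a ≤
        g (norm1 (Function.update a i b)) + h (Function.update a i b)) := by
  obtain ⟨i, hi⟩ := exists_true_of_pos a (by omega)
  have hle := norm1_le a
  have hupd := norm1_update_false a i hi
  have hha : h a = W := hh2 a (by omega)
  have key : g (norm1 (Function.update a i false)) + h (Function.update a i false) <
      g (norm1 a) + h a := by
    rw [hupd, hha]
    by_cases h2 : norm1 a = 2
    · obtain ⟨j, hj⟩ := exists_true_of_pos (Function.update a i false) (by omega)
      have := hh1 (Function.update a i false) j (by omega) hj
      rw [this]
      have hg12 : g (norm1 a - 1) < g (norm1 a) := hg _ _ (by omega) (by omega)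
      have := hdW j
      linarith
    · have := hh2 (Function.update a i false) (by omega)
      rw [this]
      have hg12 : g (norm1 a - 1) < g (norm1 a) := hg _ _ (by omega) (by omega)
      linarith
  refine ⟨⟨i, false, key⟩, fun hall => ?_⟩
  exact absurd (hall i false) (not_le.mpr key)
end
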